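/- For all λ > 0 and all γ ≥ 0: (1) ∫₀^∞ e^{−γh} (8/3)π²λ^{5/2} h⁴ e^{−λπh²} dh ≤ ∫₀^∞ e^{−γh} 4πλ^{3/2} h² e^{−λπh²} dh and ∫₀^∞ e^{−γr} (4λπr/3)(erfc(r√(λπ)) + 2r√λ e^{−λπr²}) dr ≤ ∫₀^∞ e^{−γr} 4λπ r · erfc(r√(λπ)) dr; (2) the reverse inequalities hold when e^{−γ·} is replaced by e^{γ·} (all integrals being finite). That is, H_{I'} ≥_L H_I, R_{I'} ≥_L R_I, H_{I'} ≥_{mgf} H_I and R_{I'} ≥_{mgf} R_I. -/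

import Mathlib

open MeasureTheory Set

/-- The complementary error function `erfc(z) = (2/√π) ∫_z^∞ e^{−u²} du`. -/
noncomputable def erfc (z : ℝ) : ℝ := 2 / Real.sqrt Real.pi * ∫ u in Set.Ioi z, Real.exp (-u ^ 2)

/-- Density of the nearest-interferer distance `H_I` at a typical max-interference epoch. -/
noncomputable def fHI (lam h : ℝ) : ℝ :=
  4 * Real.pi * lam ^ ((3:ℝ)/2) * h ^ 2 * Real.exp (-(lam * Real.pi * h ^ 2))

/-- Density of the typical tropical-interference-handover distance `H_{I'}`. -/
noncomputable def fHI' (lam h : ℝ) : ℝ :=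
  8/3 * Real.pi ^ 2 * lam ^ ((5:ℝ)/2) * h ^ 4 * Real.exp (-(lam * Real.pi * h ^ 2))

/-- Density of the serving-station distance `R_I` at a typical max-interference epoch. -/
noncomputable def fRI (lam r : ℝ) : ℝ :=
  4 * lam * Real.pi * r * erfc (r * Real.sqrt (lam * Real.pi))

/-- Density of the serving-station distance `R_{I'}` at a typical min-interference epoch. -/
noncomputable def fRI' (lam r : ℝ) : ℝ :=
  4 * lam * Real.pi * r / 3 *
    (erfc (r * Real.sqrt (lam * Real.pi)) +
      2 * r * Real.sqrt lam * Real.exp (-(lam * Real.pi * r ^ 2)))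

lemma gauss_int : Integrable (fun u : ℝ => Real.exp (-u ^ 2)) := by
  simpa using integrable_exp_neg_mul_sq (one_pos (α := ℝ))

lemma gauss_split (z : ℝ) :
    (∫ u in Set.Ioi z, Real.exp (-u ^ 2)) =
      (∫ u in Set.Ioi (0:ℝ), Real.exp (-u ^ 2)) - ∫ u in (0:ℝ)..z, Real.exp (-u ^ 2) := by
  rcases le_or_gt 0 z with hz | hz
  · rw [intervalIntegral.integral_of_le hz, eq_sub_iff_add_eq, ← Ioc_union_Ioi_eq_Ioi hz,
      setIntegral_union Ioc_disjoint_Ioi_same measurableSet_Ioi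
        gauss_int.integrableOn gauss_int.integrableOn]
    ring
  · rw [intervalIntegral.integral_of_ge hz.le, ← intervalIntegral.integral_of_le hz.le,
      intervalIntegral.integral_of_le hz.le, sub_neg_eq_add, ← Ioc_union_Ioi_eq_Ioi hz.le,
      setIntegral_union Ioc_disjoint_Ioi_same measurableSet_Ioi
        gauss_int.integrableOn gauss_int.integrableOn]
    ring

lemma erfc_eq (z : ℝ) :
    erfc z = 1 - 2 / Real.sqrt Real.pi * ∫ u in (0:ℝ)..z, Real.exp (-u ^ 2) := by
  have h0 : (∫ u in Set.Ioi (0:ℝ), Real.exp (-u ^ 2)) = Real.sqrt Real.pi / 2 := by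
    simpa using integral_gaussian_Ioi 1
  rw [erfc, gauss_split, h0, mul_sub]
  have : Real.sqrt Real.pi ≠ 0 := by positivity
  field_simp

lemma erfc_hasDerivAt (z : ℝ) :
    HasDerivAt erfc (-(2 / Real.sqrt Real.pi * Real.exp (-z ^ 2))) z := by
  have h1 : HasDerivAt (fun z : ℝ => ∫ u in (0:ℝ)..z, Real.exp (-u ^ 2)) (Real.exp (-z ^ 2)) z := by
    refine intervalIntegral.integral_hasDerivAt_right (gauss_int.intervalIntegrable)
      ?_ ((Real.continuous_exp.comp (by continuity)).continuousAt)
    exact (Real.continuous_exp.comp (by continuity)).stronglyMeasurable.stronglyMeasurableAtFilter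
  have := ((h1.const_mul (2 / Real.sqrt Real.pi)).const_sub 1)
  refine HasDerivAt.congr_deriv (this.congr_of_eventuallyEq ?_) (by ring)
  filter_upwards with x
  exact erfc_eq x

lemma erfc_continuous : Continuous erfc := by
  rw [continuous_iff_continuousAt]
  exact fun z => (erfc_hasDerivAt z).continuousAt

lemma erfc_nonneg (z : ℝ) : 0 ≤ erfc z := by
  apply mul_nonneg (by positivity)
  exact setIntegral_nonneg measurableSet_Ioi fun x _ => (Real.exp_pos _).le

lemma integral_mul_gauss_Ioi (z : ℝ) :
    (∫ u in Set.Ioi z, u * Real.exp (-u ^ 2)) = Real.exp (-z ^ 2) / 2 := by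
  have hd : ∀ x ∈ Set.Ioi z, HasDerivAt (fun u : ℝ => -Real.exp (-u ^ 2) / 2)
      (x * Real.exp (-x ^ 2)) x := by
    intro x _
    have : HasDerivAt (fun u : ℝ => -u ^ 2) (-(2 * x)) x := by
      simpa using ((hasDerivAt_pow 2 x).fun_neg)
    have := (this.exp.fun_neg.div_const 2)
    refine this.congr_deriv ?_
    ring
  have hint : IntegrableOn (fun u : ℝ => u * Real.exp (-u ^ 2)) (Set.Ioi z) := by
    have := integrable_mul_exp_neg_mul_sq (one_pos (α := ℝ))
    simpa using this.integrableOn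
  have htend : Filter.Tendsto (fun u : ℝ => -Real.exp (-u ^ 2) / 2) Filter.atTop (nhds 0) := by
    have : Filter.Tendsto (fun u : ℝ => -u ^ 2) Filter.atTop Filter.atBot := by
      simpa using (tendsto_pow_atTop (two_ne_zero)).neg_atBot
    simpa using ((Real.tendsto_exp_atBot.comp this).neg.div_const 2)
  have := integral_Ioi_of_hasDerivAt_of_tendsto
    (Continuous.continuousWithinAt (by continuity)) hd hint htend
  rw [this]; ring

lemma erfc_le {z : ℝ} (hz : 0 < z) :
    erfc z ≤ Real.exp (-z ^ 2) / (z * Real.sqrt Real.pi) := by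
  have hb : (∫ u in Set.Ioi z, Real.exp (-u ^ 2)) ≤ ∫ u in Set.Ioi z, (u / z) * Real.exp (-u ^ 2) := by
    refine setIntegral_mono_on gauss_int.integrableOn ?_ measurableSet_Ioi ?_
    · have := integrable_mul_exp_neg_mul_sq (one_pos (α := ℝ))
      have h2 : Integrable (fun u : ℝ => (1/z) * (u * Real.exp (-u ^ 2))) := by
        simpa using (this.const_mul (1/z))
      refine (h2.congr ?_).integrableOn
      filter_upwards with x
      field_simp
    · intro x hx
      have h1 : (1:ℝ) ≤ x / z := (one_le_div hz).2 (le_of_lt hx)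
      nlinarith [Real.exp_pos (-x ^ 2)]
  have h2 : (∫ u in Set.Ioi z, (u / z) * Real.exp (-u ^ 2)) = Real.exp (-z^2) / (2 * z) := by
    have : (∫ u in Set.Ioi z, (u / z) * Real.exp (-u ^ 2)) =
        (1/z) * ∫ u in Set.Ioi z, u * Real.exp (-u ^ 2) := by
      rw [← integral_const_mul]
      congr 1; funext u; ring
    rw [this, integral_mul_gauss_Ioi]; field_simp
  have hπ : (0:ℝ) < Real.sqrt Real.pi := Real.sqrt_pos.2 Real.pi_pos
  calc erfc z ≤ 2 / Real.sqrt Real.pi * (Real.exp (-z^2) / (2*z)) := by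
        rw [erfc]
        exact mul_le_mul_of_nonneg_left (hb.trans_eq h2) (by positivity)
    _ = Real.exp (-z ^ 2) / (z * Real.sqrt Real.pi) := by field_simp

-- polynomial × Gaussian with linear term, integrable on Ioi 0
lemma intOn_poly_gauss (k : ℕ) (β : ℝ) {b : ℝ} (hb : 0 < b) :
    IntegrableOn (fun x : ℝ => x ^ k * Real.exp (β * x - b * x ^ 2)) (Ioi 0) := by
  have hbase : Integrable (fun x : ℝ => x ^ (k : ℝ) * Real.exp (-(b/2) * x ^ 2)) :=
    integrable_rpow_mul_exp_neg_mul_sq (by linarith) ((by norm_num : (-1:ℝ) < 0).trans_le (Nat.cast_nonneg k))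
  have hdom : Integrable
      (fun x : ℝ => Real.exp (β ^ 2 / (2*b)) * (x ^ (k : ℝ) * Real.exp (-(b/2) * x ^ 2))) :=
    hbase.const_mul _
  refine Integrable.mono hdom.integrableOn (Continuous.aestronglyMeasurable (by continuity)).restrict ?_
  rw [ae_restrict_iff' measurableSet_Ioi]
  filter_upwards with x hx
  have hx0 : (0:ℝ) < x := hx
  rw [Real.norm_eq_abs, Real.norm_eq_abs, Real.rpow_natCast,
    abs_of_nonneg (mul_nonneg (pow_nonneg hx0.le _) (Real.exp_pos _).le),
    abs_of_nonneg (mul_nonneg (Real.exp_pos _).le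
      (mul_nonneg (pow_nonneg hx0.le _) (Real.exp_pos _).le))]
  have hexp : Real.exp (β * x - b * x ^ 2) ≤
      Real.exp (β ^ 2 / (2*b)) * Real.exp (-(b/2) * x ^ 2) := by
    rw [← Real.exp_add]
    apply Real.exp_le_exp.2
    have h := sq_nonneg (β - b * x)
    rw [div_add' _ _ _ (by positivity : (2:ℝ)*b ≠ 0), le_div_iff₀ (by positivity : (0:ℝ) < 2*b)]
    nlinarith
  calc x ^ k * Real.exp (β * x - b * x ^ 2)
      ≤ x ^ k * (Real.exp (β ^ 2 / (2*b)) * Real.exp (-(b/2) * x ^ 2)) := by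
        exact mul_le_mul_of_nonneg_left hexp (by positivity)
    _ = Real.exp (β ^ 2 / (2*b)) * (x ^ k * Real.exp (-(b/2) * x ^ 2)) := by ring

lemma tendsto_poly_gauss (k : ℕ) (β : ℝ) {b : ℝ} (hb : 0 < b) :
    Filter.Tendsto (fun x : ℝ => x ^ k * Real.exp (β * x - b * x ^ 2))
      Filter.atTop (nhds 0) := by
  refine squeeze_zero' ?_ ?_ (Real.tendsto_pow_mul_exp_neg_atTop_nhds_zero k)
  · filter_upwards [Filter.eventually_ge_atTop (0:ℝ)] with x hx
    positivity
  · filter_upwards [Filter.eventually_ge_atTop ((β+1)/b), Filter.eventually_ge_atTop (0:ℝ)]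
      with x hx1 hx0
    have : β * x - b * x ^ 2 ≤ -x := by nlinarith [(div_le_iff₀ hb).1 hx1]
    exact mul_le_mul_of_nonneg_left (Real.exp_le_exp.2 this) (by positivity)

lemma intOn_mono {f g : ℝ → ℝ} (hg : IntegrableOn g (Ioi 0))
    (hf : AEStronglyMeasurable f (volume.restrict (Ioi 0)))
    (h : ∀ x ∈ Ioi (0:ℝ), |f x| ≤ g x) : IntegrableOn f (Ioi 0) := by
  refine Integrable.mono hg hf ?_
  rw [ae_restrict_iff' measurableSet_Ioi]
  filter_upwards with x hx
  exact (h x hx).trans (le_abs_self _)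

-- key FTC sign lemma
lemma key {ψ ψ' : ℝ → ℝ} (ε : ℝ) (hψ0 : ψ 0 = 0)
    (hd : ∀ x, HasDerivAt ψ (ψ' x) x)
    (hint1 : IntegrableOn (fun x => Real.exp (ε * x) * ψ' x) (Ioi 0))
    (hint2 : IntegrableOn (fun x => Real.exp (ε * x) * ψ x) (Ioi 0))
    (htend : Filter.Tendsto (fun x => Real.exp (ε * x) * ψ x) Filter.atTop (nhds 0)) :
    (∫ x in Ioi (0:ℝ), Real.exp (ε * x) * ψ' x) =
      -ε * ∫ x in Ioi (0:ℝ), Real.exp (ε * x) * ψ x := by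
  have hΦd : ∀ x, HasDerivAt (fun x => Real.exp (ε * x) * ψ x)
      (Real.exp (ε * x) * ψ' x + ε * (Real.exp (ε * x) * ψ x)) x := by
    intro x
    have he : HasDerivAt (fun x : ℝ => Real.exp (ε * x)) (Real.exp (ε * x) * ε) x := by
      simpa using ((hasDerivAt_id x).const_mul ε).exp
    have := he.fun_mul (hd x)
    refine this.congr_deriv ?_
    ring
  have hΦint : IntegrableOn
      (fun x => Real.exp (ε * x) * ψ' x + ε * (Real.exp (ε * x) * ψ x)) (Ioi 0) :=
    hint1.add (hint2.const_mul ε)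
  have h0 : (∫ x in Ioi (0:ℝ), (Real.exp (ε * x) * ψ' x + ε * (Real.exp (ε * x) * ψ x))) =
      0 - Real.exp (ε * 0) * ψ 0 :=
    integral_Ioi_of_hasDerivAt_of_tendsto
      (Continuous.continuousWithinAt
        ((by continuity : Continuous fun x : ℝ => Real.exp (ε*x)).mul
          (continuous_iff_continuousAt.2 fun x => (hd x).continuousAt)))
      (fun x _ => hΦd x) hΦint htend
  rw [integral_add hint1 (hint2.const_mul ε), integral_const_mul] at h0
  rw [hψ0] at h0
  simp at h0
  linarith

lemma gauss_deriv (b : ℝ) (x : ℝ) :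
    HasDerivAt (fun h : ℝ => Real.exp (-(b * h ^ 2))) (-(2 * b * x) * Real.exp (-(b * x ^ 2))) x := by
  have h1 : HasDerivAt (fun h : ℝ => -(b * h ^ 2)) (-(2 * b * x)) x := by
    have := ((hasDerivAt_pow 2 x).const_mul b).fun_neg
    refine this.congr_deriv ?_
    ring
  have := h1.exp
  convert this using 1
  ring

lemma exp_merge (ε b x : ℝ) :
    Real.exp (ε * x) * Real.exp (-(b * x ^ 2)) = Real.exp (ε * x - b * x ^ 2) := by
  rw [← Real.exp_add]; ring_nf

lemma masterH (lam ε : ℝ) (hlam : 0 < lam) :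
    IntegrableOn (fun h : ℝ => Real.exp (ε * h) * fHI' lam h) (Ioi 0) ∧
    IntegrableOn (fun h : ℝ => Real.exp (ε * h) * fHI lam h) (Ioi 0) ∧
    ∃ c : ℝ, 0 ≤ c ∧
      ((∫ h in Ioi (0:ℝ), Real.exp (ε * h) * fHI lam h) -
        ∫ h in Ioi (0:ℝ), Real.exp (ε * h) * fHI' lam h) = -ε * c := by
  set b := lam * Real.pi with hbdef
  have hb : 0 < b := by positivity
  have hl32 : (0:ℝ) < lam ^ ((3:ℝ)/2) := Real.rpow_pos_of_pos hlam _
  have hl52 : lam ^ ((5:ℝ)/2) = lam ^ ((3:ℝ)/2) * lam := by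
    rw [show ((5:ℝ)/2) = (3:ℝ)/2 + 1 by norm_num, Real.rpow_add hlam, Real.rpow_one]
  -- ψ and ψ'
  set ψ : ℝ → ℝ := fun h => h ^ 3 * Real.exp (-(b * h ^ 2)) with hψdef
  set ψ' : ℝ → ℝ := fun h => (3 * h ^ 2 - 2 * b * h ^ 4) * Real.exp (-(b * h ^ 2)) with hψ'def
  have hd : ∀ x, HasDerivAt ψ (ψ' x) x := by
    intro x
    have := (hasDerivAt_pow 3 x).fun_mul (gauss_deriv b x)
    refine this.congr_deriv ?_
    simp [hψ'def]
    ring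
  have hcont : Continuous fun h : ℝ => Real.exp (ε * h) := by continuity
  -- integrabilities
  have int1 : IntegrableOn (fun h : ℝ => Real.exp (ε * h) * fHI' lam h) (Ioi 0) := by
    refine intOn_mono (((intOn_poly_gauss 4 ε hb).const_mul
      (8/3 * Real.pi ^ 2 * lam ^ ((5:ℝ)/2)))) ?_ ?_
    · exact (hcont.mul (by unfold fHI'; continuity)).aestronglyMeasurable.restrict
    · intro x hx
      have hx0 : (0:ℝ) < x := hx
      rw [abs_of_nonneg (by unfold fHI'; positivity)]
      refine le_of_eq ?_
      simp only [fHI', ← hbdef, ← exp_merge ε b x]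
      ring
  have int2 : IntegrableOn (fun h : ℝ => Real.exp (ε * h) * fHI lam h) (Ioi 0) := by
    refine intOn_mono (((intOn_poly_gauss 2 ε hb).const_mul
      (4 * Real.pi * lam ^ ((3:ℝ)/2)))) ?_ ?_
    · exact (hcont.mul (by unfold fHI; continuity)).aestronglyMeasurable.restrict
    · intro x hx
      have hx0 : (0:ℝ) < x := hx
      rw [abs_of_nonneg (by unfold fHI; positivity)]
      refine le_of_eq ?_
      simp only [fHI, ← hbdef, ← exp_merge ε b x]
      ring
  have intψ : IntegrableOn (fun x : ℝ => Real.exp (ε * x) * ψ x) (Ioi 0) := by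
    refine intOn_mono (intOn_poly_gauss 3 ε hb) ?_ ?_
    · exact (hcont.mul (by simp only [hψdef]; continuity)).aestronglyMeasurable.restrict
    · intro x hx
      have hx0 : (0:ℝ) < x := hx
      rw [abs_of_nonneg (by simp only [hψdef]; positivity)]
      refine le_of_eq ?_
      simp only [hψdef, ← exp_merge ε b x]
      ring
  have intψ' : IntegrableOn (fun x : ℝ => Real.exp (ε * x) * ψ' x) (Ioi 0) := by
    refine intOn_mono (((intOn_poly_gauss 2 ε hb).const_mul 3).add
      ((intOn_poly_gauss 4 ε hb).const_mul (2*b))) ?_ ?_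
    · exact (hcont.mul (by simp only [hψ'def]; continuity)).aestronglyMeasurable.restrict
    · intro x hx
      have hx0 : (0:ℝ) < x := hx
      simp only [Pi.add_apply, hψ'def, ← exp_merge ε b x]
      have hE := Real.exp_pos (ε * x)
      have hG := Real.exp_pos (-(b * x ^ 2))
      rw [abs_mul, abs_mul, abs_of_nonneg hE.le, abs_of_nonneg hG.le]
      have habs : |3 * x ^ 2 - 2 * b * x ^ 4| ≤ 3 * x ^ 2 + 2 * b * x ^ 4 := by
        apply abs_le.2
        have h4 : 0 ≤ b * x ^ 4 := mul_nonneg hb.le (pow_nonneg hx0.le 4)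
        constructor <;> nlinarith [sq_nonneg x]
      nlinarith [mul_le_mul_of_nonneg_right habs (mul_nonneg hE.le hG.le)]
  have htend : Filter.Tendsto (fun x : ℝ => Real.exp (ε * x) * ψ x) Filter.atTop (nhds 0) := by
    have : (fun x : ℝ => Real.exp (ε * x) * ψ x) =
        fun x : ℝ => x ^ 3 * Real.exp (ε * x - b * x ^ 2) := by
      funext x
      simp only [hψdef, ← exp_merge ε b x]
      ring
    rw [this]
    exact tendsto_poly_gauss 3 ε hb
  have hkey := key ε (by simp [hψdef]) hd intψ' intψ htend
  refine ⟨int1, int2, (4 * Real.pi * lam ^ ((3:ℝ)/2) / 3) *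
    ∫ x in Ioi (0:ℝ), Real.exp (ε * x) * ψ x, ?_, ?_⟩
  · apply mul_nonneg (by positivity)
    apply setIntegral_nonneg measurableSet_Ioi
    intro x hx
    have hx0 : (0:ℝ) < x := hx
    simp only [hψdef]
    positivity
  · rw [← integral_sub int2 int1]
    have heq : ∀ x : ℝ, Real.exp (ε * x) * fHI lam x - Real.exp (ε * x) * fHI' lam x =
        (4 * Real.pi * lam ^ ((3:ℝ)/2) / 3) * (Real.exp (ε * x) * ψ' x) := by
      intro x
      simp only [fHI, fHI', hψ'def, ← hbdef, hl52]
      ring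
    calc (∫ x in Ioi (0:ℝ), (Real.exp (ε * x) * fHI lam x - Real.exp (ε * x) * fHI' lam x))
        = ∫ x in Ioi (0:ℝ), (4 * Real.pi * lam ^ ((3:ℝ)/2) / 3) * (Real.exp (ε * x) * ψ' x) := by
          exact integral_congr_ae (ae_of_all _ fun x => heq x)
      _ = (4 * Real.pi * lam ^ ((3:ℝ)/2) / 3) * ∫ x in Ioi (0:ℝ), Real.exp (ε * x) * ψ' x :=
          integral_const_mul _ _
      _ = -ε * ((4 * Real.pi * lam ^ ((3:ℝ)/2) / 3) *
            ∫ x in Ioi (0:ℝ), Real.exp (ε * x) * ψ x) := by rw [hkey]; ring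

lemma masterR (lam ε : ℝ) (hlam : 0 < lam) :
    IntegrableOn (fun r : ℝ => Real.exp (ε * r) * fRI' lam r) (Ioi 0) ∧
    IntegrableOn (fun r : ℝ => Real.exp (ε * r) * fRI lam r) (Ioi 0) ∧
    ∃ c : ℝ, 0 ≤ c ∧
      ((∫ r in Ioi (0:ℝ), Real.exp (ε * r) * fRI lam r) -
        ∫ r in Ioi (0:ℝ), Real.exp (ε * r) * fRI' lam r) = -ε * c := by
  set b := lam * Real.pi with hbdef
  have hb : 0 < b := by positivity
  set s := Real.sqrt (lam * Real.pi) with hsdef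
  have hs0 : 0 < s := Real.sqrt_pos.2 hb
  have hs2 : s ^ 2 = b := Real.sq_sqrt hb.le
  have hpi : (0:ℝ) < Real.sqrt Real.pi := Real.sqrt_pos.2 Real.pi_pos
  have hslam : 2 / Real.sqrt Real.pi * s = 2 * Real.sqrt lam := by
    rw [hsdef, Real.sqrt_mul hlam.le]
    field_simp
  have herfc_bd : ∀ x : ℝ, 0 < x →
      erfc (x * s) ≤ Real.exp (-(b * x ^ 2)) / (x * s * Real.sqrt Real.pi) := by
    intro x hx
    have h1 := erfc_le (mul_pos hx hs0)
    have h2 : (x * s) ^ 2 = b * x ^ 2 := by rw [mul_pow, hs2, mul_comm]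
    rwa [h2] at h1
  set ψ : ℝ → ℝ := fun r => r ^ 2 * erfc (r * s) with hψdef
  set ψ' : ℝ → ℝ := fun r =>
    2 * r * erfc (r * s) - 2 * Real.sqrt lam * r ^ 2 * Real.exp (-(b * r ^ 2)) with hψ'def
  have hd : ∀ x, HasDerivAt ψ (ψ' x) x := by
    intro x
    have hin : HasDerivAt (fun r : ℝ => r * s) s x := hasDerivAt_mul_const s
    have herf : HasDerivAt (fun r : ℝ => erfc (r * s))
        (-(2 / Real.sqrt Real.pi * Real.exp (-(x * s) ^ 2)) * s) x :=
      HasDerivAt.comp (h₂ := erfc) x (erfc_hasDerivAt (x * s)) hin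
    have h2 : (x * s) ^ 2 = b * x ^ 2 := by rw [mul_pow, hs2, mul_comm]
    have := (hasDerivAt_pow 2 x).fun_mul herf
    refine this.congr_deriv ?_
    simp only [hψ'def, h2]
    have e1 : x ^ 2 * (-(2 / Real.sqrt Real.pi * Real.exp (-(b * x ^ 2))) * s) =
        -(2 / Real.sqrt Real.pi * s) * (x ^ 2 * Real.exp (-(b * x ^ 2))) := by ring
    rw [e1, hslam]
    push_cast
    ring
  have hcont : Continuous fun h : ℝ => Real.exp (ε * h) := Real.continuous_exp.comp (continuous_const.mul continuous_id)
  have hcerf : Continuous fun r : ℝ => erfc (r * s) :=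
    erfc_continuous.comp (continuous_id.mul continuous_const)
  have hcG : Continuous fun r : ℝ => Real.exp (-(b * r ^ 2)) :=
    Real.continuous_exp.comp ((continuous_const.mul (continuous_pow 2)).neg)
  have hcRI : Continuous fun r : ℝ => fRI lam r := by
    unfold fRI
    rw [← hsdef]
    exact ((continuous_const.mul continuous_id).mul hcerf)
  have hcRI' : Continuous fun r : ℝ => fRI' lam r := by
    unfold fRI'
    rw [← hsdef]
    refine ((continuous_const.mul continuous_id).div_const 3).mul (hcerf.add ?_)
    refine Continuous.mul ?_ ?_
    · exact (continuous_const.mul continuous_id).mul continuous_const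
    · exact Real.continuous_exp.comp ((continuous_const.mul (continuous_pow 2)).neg)
  have fRI_eq : ∀ x : ℝ, fRI lam x = 4 * b * x * erfc (x * s) := by
    intro x
    rw [fRI, ← hsdef, hbdef]
    ring
  have fRI'_eq : ∀ x : ℝ, fRI' lam x =
      4 * b * x / 3 * (erfc (x * s) + 2 * x * Real.sqrt lam * Real.exp (-(b * x ^ 2))) := by
    intro x
    rw [fRI', ← hsdef, hbdef]
    ring
  -- integrability of e^{εr} fRI
  have int4 : IntegrableOn (fun r : ℝ => Real.exp (ε * r) * fRI lam r) (Ioi 0) := by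
    refine intOn_mono ((intOn_poly_gauss 0 ε hb).const_mul (4 * b / (s * Real.sqrt Real.pi))) ?_ ?_
    · exact (hcont.mul hcRI).aestronglyMeasurable.restrict
    · intro x hx
      have hx0 : (0:ℝ) < x := hx
      have hE := Real.exp_pos (ε * x)
      rw [fRI_eq x, abs_of_nonneg (mul_nonneg hE.le
        (mul_nonneg (by positivity) (erfc_nonneg _)))]
      calc Real.exp (ε * x) * (4 * b * x * erfc (x * s))
          ≤ Real.exp (ε * x) * (4 * b * x *
              (Real.exp (-(b * x ^ 2)) / (x * s * Real.sqrt Real.pi))) := by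
            gcongr
            exact herfc_bd x hx0
        _ = 4 * b / (s * Real.sqrt Real.pi) * (x ^ 0 * Real.exp (ε * x - b * x ^ 2)) := by
            rw [← exp_merge ε b x]
            field_simp
  -- integrability of e^{εr} fRI'
  have int3 : IntegrableOn (fun r : ℝ => Real.exp (ε * r) * fRI' lam r) (Ioi 0) := by
    refine intOn_mono
      (((intOn_poly_gauss 0 ε hb).const_mul (4 * b / (3 * s * Real.sqrt Real.pi))).add
        ((intOn_poly_gauss 2 ε hb).const_mul (8 * b * Real.sqrt lam / 3))) ?_ ?_
    · exact (hcont.mul hcRI').aestronglyMeasurable.restrict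
    · intro x hx
      have hx0 : (0:ℝ) < x := hx
      have hE := Real.exp_pos (ε * x)
      rw [Pi.add_apply, fRI'_eq x, abs_of_nonneg (mul_nonneg hE.le
        (mul_nonneg (by positivity) (add_nonneg (erfc_nonneg _) (by positivity))))]
      calc Real.exp (ε * x) * (4 * b * x / 3 *
              (erfc (x * s) + 2 * x * Real.sqrt lam * Real.exp (-(b * x ^ 2))))
          ≤ Real.exp (ε * x) * (4 * b * x / 3 *
              (Real.exp (-(b * x ^ 2)) / (x * s * Real.sqrt Real.pi) +
                2 * x * Real.sqrt lam * Real.exp (-(b * x ^ 2)))) := by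
            gcongr
            exact herfc_bd x hx0
        _ = 4 * b / (3 * s * Real.sqrt Real.pi) * (x ^ 0 * Real.exp (ε * x - b * x ^ 2)) +
            8 * b * Real.sqrt lam / 3 * (x ^ 2 * Real.exp (ε * x - b * x ^ 2)) := by
            rw [← exp_merge ε b x]
            field_simp
            ring
  -- integrability of e^{εr} ψ
  have intψ : IntegrableOn (fun x : ℝ => Real.exp (ε * x) * ψ x) (Ioi 0) := by
    refine intOn_mono ((intOn_poly_gauss 1 ε hb).const_mul (1 / (s * Real.sqrt Real.pi))) ?_ ?_
    · exact (hcont.mul ((continuous_pow 2).mul hcerf)).aestronglyMeasurable.restrict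
    · intro x hx
      have hx0 : (0:ℝ) < x := hx
      have hE := Real.exp_pos (ε * x)
      rw [abs_of_nonneg (mul_nonneg hE.le (mul_nonneg (by positivity) (erfc_nonneg _)))]
      calc Real.exp (ε * x) * (x ^ 2 * erfc (x * s))
          ≤ Real.exp (ε * x) * (x ^ 2 *
              (Real.exp (-(b * x ^ 2)) / (x * s * Real.sqrt Real.pi))) := by
            gcongr
            exact herfc_bd x hx0
        _ = 1 / (s * Real.sqrt Real.pi) * (x ^ 1 * Real.exp (ε * x - b * x ^ 2)) := by
            rw [← exp_merge ε b x]
            field_simp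
  -- integrability of e^{εr} ψ'
  have intψ' : IntegrableOn (fun x : ℝ => Real.exp (ε * x) * ψ' x) (Ioi 0) := by
    refine intOn_mono
      (((intOn_poly_gauss 0 ε hb).const_mul (2 / (s * Real.sqrt Real.pi))).add
        ((intOn_poly_gauss 2 ε hb).const_mul (2 * Real.sqrt lam))) ?_ ?_
    · refine (hcont.mul ?_).aestronglyMeasurable.restrict
      simp only [hψ'def]
      exact ((continuous_const.mul continuous_id).mul hcerf).sub
        ((continuous_const.mul (continuous_pow 2)).mul hcG)
    · intro x hx
      have hx0 : (0:ℝ) < x := hx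
      have hE := Real.exp_pos (ε * x)
      rw [Pi.add_apply]
      have h1 : 0 ≤ 2 * x * erfc (x * s) := mul_nonneg (by positivity) (erfc_nonneg _)
      have h2 : (0:ℝ) ≤ 2 * Real.sqrt lam * x ^ 2 * Real.exp (-(b * x ^ 2)) := by positivity
      have habs : |ψ' x| ≤ 2 * x * erfc (x * s) +
          2 * Real.sqrt lam * x ^ 2 * Real.exp (-(b * x ^ 2)) := by
        simp only [hψ'def]
        refine (abs_sub _ _).trans ?_
        rw [abs_of_nonneg h1, abs_of_nonneg h2]
      rw [abs_mul, abs_of_nonneg hE.le]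
      calc Real.exp (ε * x) * |ψ' x|
          ≤ Real.exp (ε * x) * (2 * x * erfc (x * s) +
              2 * Real.sqrt lam * x ^ 2 * Real.exp (-(b * x ^ 2))) :=
            mul_le_mul_of_nonneg_left habs hE.le
        _ ≤ Real.exp (ε * x) * (2 * x * (Real.exp (-(b * x ^ 2)) / (x * s * Real.sqrt Real.pi)) +
              2 * Real.sqrt lam * x ^ 2 * Real.exp (-(b * x ^ 2))) := by
            gcongr
            exact herfc_bd x hx0
        _ = 2 / (s * Real.sqrt Real.pi) * (x ^ 0 * Real.exp (ε * x - b * x ^ 2)) +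
            2 * Real.sqrt lam * (x ^ 2 * Real.exp (ε * x - b * x ^ 2)) := by
            rw [← exp_merge ε b x]
            field_simp
  -- tendsto
  have htend : Filter.Tendsto (fun x : ℝ => Real.exp (ε * x) * ψ x) Filter.atTop (nhds 0) := by
    have hg0 : Filter.Tendsto
        (fun x : ℝ => 1 / (s * Real.sqrt Real.pi) * (x ^ 1 * Real.exp (ε * x - b * x ^ 2)))
        Filter.atTop (nhds 0) := by
      have := (tendsto_poly_gauss 1 ε hb).const_mul (1 / (s * Real.sqrt Real.pi))
      simpa [mul_comm] using this
    refine squeeze_zero' ?_ ?_ hg0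
    · filter_upwards [Filter.eventually_gt_atTop (0:ℝ)] with x hx
      exact mul_nonneg (Real.exp_pos _).le (mul_nonneg (by positivity) (erfc_nonneg _))
    · filter_upwards [Filter.eventually_gt_atTop (0:ℝ)] with x hx
      have hE := Real.exp_pos (ε * x)
      calc Real.exp (ε * x) * (x ^ 2 * erfc (x * s))
          ≤ Real.exp (ε * x) * (x ^ 2 *
              (Real.exp (-(b * x ^ 2)) / (x * s * Real.sqrt Real.pi))) := by
            gcongr
            exact herfc_bd x hx
        _ = 1 / (s * Real.sqrt Real.pi) * (x ^ 1 * Real.exp (ε * x - b * x ^ 2)) := by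
            rw [← exp_merge ε b x]
            field_simp
  have hkey := key ε (by simp [hψdef]) hd intψ' intψ htend
  refine ⟨int3, int4, (4 * b / 3) * ∫ x in Ioi (0:ℝ), Real.exp (ε * x) * ψ x, ?_, ?_⟩
  · refine mul_nonneg (by positivity) (setIntegral_nonneg measurableSet_Ioi fun x hx => ?_)
    have hx0 : (0:ℝ) < x := hx
    exact mul_nonneg (Real.exp_pos _).le (mul_nonneg (by positivity) (erfc_nonneg _))
  · rw [← integral_sub int4 int3]
    have heq : ∀ x : ℝ, Real.exp (ε * x) * fRI lam x - Real.exp (ε * x) * fRI' lam x =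
        (4 * b / 3) * (Real.exp (ε * x) * ψ' x) := by
      intro x
      rw [fRI_eq x, fRI'_eq x]
      simp only [hψ'def]
      ring
    calc (∫ x in Ioi (0:ℝ), (Real.exp (ε * x) * fRI lam x - Real.exp (ε * x) * fRI' lam x))
        = ∫ x in Ioi (0:ℝ), (4 * b / 3) * (Real.exp (ε * x) * ψ' x) :=
          integral_congr_ae (ae_of_all _ fun x => heq x)
      _ = (4 * b / 3) * ∫ x in Ioi (0:ℝ), Real.exp (ε * x) * ψ' x := integral_const_mul _ _
      _ = -ε * ((4 * b / 3) * ∫ x in Ioi (0:ℝ), Real.exp (ε * x) * ψ x) := by rw [hkey]; ring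

/-- Laplace-transform and mgf orderings `H_{I'} ≥_L H_I`, `R_{I'} ≥_L R_I`,
`H_{I'} ≥_{mgf} H_I` and `R_{I'} ≥_{mgf} R_I`: for all `λ > 0` and `γ ≥ 0`,
(1) `∫ e^{−γh} f_{H_{I'}} ≤ ∫ e^{−γh} f_{H_I}` and `∫ e^{−γr} f_{R_{I'}} ≤ ∫ e^{−γr} f_{R_I}`;
(2) the reverse inequalities hold with `e^{−γ·}` replaced by `e^{γ·}`
(all integrals being finite). -/
theorem stmt_15 (lam γ : ℝ) (hlam : 0 < lam) (hγ : 0 ≤ γ) :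
    IntegrableOn (fun h : ℝ => Real.exp (-(γ * h)) * fHI' lam h) (Ioi 0) ∧
    IntegrableOn (fun h : ℝ => Real.exp (-(γ * h)) * fHI lam h) (Ioi 0) ∧
    IntegrableOn (fun r : ℝ => Real.exp (-(γ * r)) * fRI' lam r) (Ioi 0) ∧
    IntegrableOn (fun r : ℝ => Real.exp (-(γ * r)) * fRI lam r) (Ioi 0) ∧
    IntegrableOn (fun h : ℝ => Real.exp (γ * h) * fHI' lam h) (Ioi 0) ∧
    IntegrableOn (fun h : ℝ => Real.exp (γ * h) * fHI lam h) (Ioi 0) ∧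
    IntegrableOn (fun r : ℝ => Real.exp (γ * r) * fRI' lam r) (Ioi 0) ∧
    IntegrableOn (fun r : ℝ => Real.exp (γ * r) * fRI lam r) (Ioi 0) ∧
    (∫ h in Ioi (0:ℝ), Real.exp (-(γ * h)) * fHI' lam h) ≤
      (∫ h in Ioi (0:ℝ), Real.exp (-(γ * h)) * fHI lam h) ∧
    (∫ r in Ioi (0:ℝ), Real.exp (-(γ * r)) * fRI' lam r) ≤
      (∫ r in Ioi (0:ℝ), Real.exp (-(γ * r)) * fRI lam r) ∧
    (∫ h in Ioi (0:ℝ), Real.exp (γ * h) * fHI' lam h) ≥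
      (∫ h in Ioi (0:ℝ), Real.exp (γ * h) * fHI lam h) ∧
    (∫ r in Ioi (0:ℝ), Real.exp (γ * r) * fRI' lam r) ≥
      ∫ r in Ioi (0:ℝ), Real.exp (γ * r) * fRI lam r := by
  have hH1 := masterH lam (-γ) hlam
  have hH2 := masterH lam γ hlam
  have hR1 := masterR lam (-γ) hlam
  have hR2 := masterR lam γ hlam
  obtain ⟨iH'm, iHm, cHm, hcHm, hHm⟩ := hH1
  obtain ⟨iH'p, iHp, cHp, hcHp, hHp⟩ := hH2
  obtain ⟨iR'm, iRm, cRm, hcRm, hRm⟩ := hR1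
  obtain ⟨iR'p, iRp, cRp, hcRp, hRp⟩ := hR2
  simp only [← neg_mul]
  refine ⟨iH'm, iHm, iR'm, iRm, iH'p, iHp, iR'p, iRp, ?_, ?_, ?_, ?_⟩
  · nlinarith [mul_nonneg hγ hcHm]
  · nlinarith [mul_nonneg hγ hcRm]
  · nlinarith [mul_nonneg hγ hcHp]
  · nlinarith [mul_nonneg hγ hcRp]
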